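/- Under Assumptions A and B there exist constants c > 0 and N₀, depending only on c₁, p and γ, such that for all N ≥ N₀ and all real α₁, α_c: with v¹_i = α₁ i/L and vᶜ_i = α_c (N̄ − i)/(N̄ − K), one has Σ_{i=K}^{L} (v¹_i − vᶜ_i)² ≥ c (L−K) γ² (α_c² + α₁²). -/

import Mathlib

set_option maxHeartbeats 1000000

lemma sum_Icc_shift_range (K L : ℤ) (g : ℤ → ℝ) :
    ∑ i ∈ Finset.Icc K L, g i = ∑ j ∈ Finset.range (L + 1 - K).toNat, g (K + j) := by
  apply Finset.sum_nbij' (fun i => (i - K).toNat) (fun j => K + (j:ℤ))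
  · intro i hi
    simp only [Finset.mem_Icc] at hi
    simp only [Finset.mem_range]
    omega
  · intro j hj
    simp only [Finset.mem_range] at hj
    simp only [Finset.mem_Icc]
    omega
  · intro i hi; simp only [Finset.mem_Icc] at hi; omega
  · intro j hj; simp only [Finset.mem_range] at hj; omega
  · intro i hi; simp only [Finset.mem_Icc] at hi; congr 1; omega

lemma sum_sq_linear (a b : ℝ) (n : ℕ) :
    ∑ j ∈ Finset.range n, (a + b * (j:ℝ))^2 =
      (n:ℝ) * a^2 + a * b * ((n:ℝ) * ((n:ℝ) - 1)) +
        b^2 * ((n:ℝ) * ((n:ℝ) - 1) * (2*(n:ℝ) - 1)) / 6 := by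
  induction n with
  | zero => simp
  | succ n ih =>
    rw [Finset.sum_range_succ, ih]
    push_cast
    ring

/-- Step A: sum of squares of a linear function on `n ≥ 2` points dominates
`(n/12)` times the sum of squares of the endpoint values. -/
lemma sum_sq_linear_ge (a b : ℝ) (n : ℕ) (hn : 2 ≤ n) :
    (n:ℝ)/12 * (a^2 + (a + b * ((n:ℝ) - 1))^2) ≤
      ∑ j ∈ Finset.range n, (a + b * (j:ℝ))^2 := by
  rw [sum_sq_linear]
  have hn' : (2:ℝ) ≤ (n:ℝ) := by exact_mod_cast hn
  nlinarith [sq_nonneg (2*a + b*((n:ℝ)-1)), sq_nonneg (a + b*((n:ℝ)-1)), sq_nonneg a,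
    sq_nonneg b, mul_nonneg (sq_nonneg b) (sub_nonneg.2 hn'), sq_nonneg (b*((n:ℝ)-1))]

/-- lower bound for the overlap mismatch of the linear atomistic
and continuum modes (estimate (eq1:ap), Appendix B of the paper). -/
theorem linear_modes_overlap_bound (c₁ p γ : ℝ)
    (hc₁ : 0 < c₁) (hp : 1 < p) (hγ1 : γ < 1) :
    ∃ (c : ℝ) (N₀ : ℤ), 0 < c ∧
      ∀ (N K L : ℤ),
        5 ≤ N → 0 < K → K < L → L ≤ N - 1 → 4 ≤ L → N₀ ≤ N →
        -- Assumption A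
        (L : ℝ) ≤ c₁ * (N : ℝ) ^ (1 / p) →
        -- Assumption B
        3 / (L : ℝ) < γ →
        (L : ℝ) - (K : ℝ) = γ * (L : ℝ) →
        ∀ α₁ αc : ℝ,
          c * ((L : ℝ) - (K : ℝ)) * γ ^ 2 * (αc ^ 2 + α₁ ^ 2) ≤
            ∑ i ∈ Finset.Icc K L,
              (α₁ * (i : ℝ) / (L : ℝ)
                - αc * (((N : ℝ) - 1) - (i : ℝ)) / (((N : ℝ) - 1) - (K : ℝ))) ^ 2 := by
  refine ⟨1/48, 5, by norm_num, ?_⟩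
  intro N K L hN hK hKL hLN hL4 _ _ hγL hB α₁ αc
  -- basic positivity facts
  have hLpos : (0:ℝ) < (L:ℝ) := by exact_mod_cast lt_trans hK hKL
  have hγ0 : 0 < γ := lt_trans (div_pos (by norm_num) hLpos) hγL
  have hNK : (0:ℝ) < ((N:ℝ) - 1) - (K:ℝ) := by
    have h1 : K + 1 ≤ N - 1 := by omega
    have h2 : ((K:ℝ)) + 1 ≤ (N:ℝ) - 1 := by exact_mod_cast h1
    linarith
  have hNL : (0:ℝ) ≤ ((N:ℝ) - 1) - (L:ℝ) := by
    have h1 : (L:ℝ) ≤ (N:ℝ) - 1 := by exact_mod_cast hLN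
    linarith
  -- linear parameters
  set a : ℝ := α₁ * (K:ℝ) / (L:ℝ) - αc with ha
  set b : ℝ := α₁ / (L:ℝ) + αc / (((N:ℝ) - 1) - (K:ℝ)) with hb
  set n : ℕ := (L + 1 - K).toNat with hn
  have hn2 : 2 ≤ n := by omega
  have hncast : (n:ℝ) = (L:ℝ) - (K:ℝ) + 1 := by
    have : (n:ℤ) = L + 1 - K := by omega
    have := congrArg (fun z : ℤ => (z:ℝ)) this
    push_cast at this ⊢
    linarith
  -- rewrite the sum
  have hsum : ∑ i ∈ Finset.Icc K L,
      (α₁ * (i : ℝ) / (L : ℝ)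
        - αc * (((N : ℝ) - 1) - (i : ℝ)) / (((N : ℝ) - 1) - (K : ℝ))) ^ 2
      = ∑ j ∈ Finset.range n, (a + b * (j:ℝ))^2 := by
    rw [sum_Icc_shift_range K L]
    apply Finset.sum_congr rfl
    intro j _
    have : α₁ * ((K:ℝ) + (j:ℝ)) / (L:ℝ)
        - αc * (((N:ℝ) - 1) - ((K:ℝ) + (j:ℝ))) / (((N:ℝ) - 1) - (K:ℝ)) = a + b * (j:ℝ) := by
      rw [ha, hb]
      field_simp
      ring
    rw [show ((K + (j:ℤ) : ℤ):ℝ) = (K:ℝ) + (j:ℝ) by push_cast; ring, this]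
  rw [hsum]
  -- endpoint values
  have hstepA := sum_sq_linear_ge a b n hn2
  set fL : ℝ := a + b * ((n:ℝ) - 1) with hfL
  -- the ratio r and the key algebraic identities
  set r : ℝ := (((N:ℝ) - 1) - (L:ℝ)) / (((N:ℝ) - 1) - (K:ℝ)) with hr
  have hr0 : 0 ≤ r := div_nonneg hNL (le_of_lt hNK)
  have hr1 : r ≤ 1 := by
    rw [hr, div_le_one hNK]
    have : (K:ℝ) < (L:ℝ) := by exact_mod_cast hKL
    linarith
  have hKLγ : (K:ℝ) / (L:ℝ) = 1 - γ := by
    field_simp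
    linarith [hγL]
  have hfLval : fL = α₁ - αc * r := by
    rw [hfL, ha, hb, hr, hncast]
    field_simp
    ring
  have haval : a = α₁ * (1 - γ) - αc := by
    rw [ha, ← hKLγ]; ring
  -- identities: αc * s = (1-γ) * fL - a, α₁ * s = fL - r * a, with s = 1 - (1-γ)*r
  set s : ℝ := 1 - (1 - γ) * r with hs
  have hsγ : γ ≤ s := by nlinarith
  have hid1 : αc * s = (1 - γ) * fL - a := by rw [hfLval, haval, hs]; ring
  have hid2 : α₁ * s = fL - r * a := by rw [hfLval, haval, hs]; ring
  -- Step B: γ²(α₁² + αc²) ≤ 4 (a² + fL²)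
  have hs2 : γ^2 ≤ s^2 := pow_le_pow_left₀ hγ0.le hsγ 2
  have hstepB : γ^2 * (αc^2 + α₁^2) ≤ 4 * (a^2 + fL^2) := by
    have A1 : γ^2 * αc^2 ≤ s^2 * αc^2 := mul_le_mul_of_nonneg_right hs2 (sq_nonneg αc)
    have A2 : s^2 * αc^2 = ((1 - γ) * fL - a)^2 := by rw [← hid1]; ring
    have A3 : ((1 - γ) * fL - a)^2 ≤ 2 * (a^2 + fL^2) := by
      nlinarith [sq_nonneg ((1 - γ) * fL + a),
        mul_nonneg (mul_nonneg hγ0.le (show (0:ℝ) ≤ 2 - γ by linarith)) (sq_nonneg fL)]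
    have B1 : γ^2 * α₁^2 ≤ s^2 * α₁^2 := mul_le_mul_of_nonneg_right hs2 (sq_nonneg α₁)
    have B2 : s^2 * α₁^2 = (fL - r * a)^2 := by rw [← hid2]; ring
    have B3 : (fL - r * a)^2 ≤ 2 * (a^2 + fL^2) := by
      nlinarith [sq_nonneg (fL + r * a),
        mul_nonneg (mul_nonneg (show (0:ℝ) ≤ 1 - r by linarith) (show (0:ℝ) ≤ 1 + r by linarith)) (sq_nonneg a)]
    linarith [A1, A2, A3, B1, B2, B3, mul_add (γ^2) (αc^2) (α₁^2)]
  -- combine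
  have hmono : (1:ℝ)/48 * ((L:ℝ) - (K:ℝ)) * γ^2 * (αc^2 + α₁^2) ≤
      (n:ℝ)/12 * (a^2 + fL^2) := by
    have hLK : (0:ℝ) < (L:ℝ) - (K:ℝ) := by
      have : (K:ℝ) < (L:ℝ) := by exact_mod_cast hKL
      linarith
    have hnge : (L:ℝ) - (K:ℝ) ≤ (n:ℝ) := by rw [hncast]; linarith
    have hpos2 : (0:ℝ) ≤ a^2 + fL^2 := by positivity
    calc (1:ℝ)/48 * ((L:ℝ) - (K:ℝ)) * γ^2 * (αc^2 + α₁^2)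
        = ((L:ℝ) - (K:ℝ))/48 * (γ^2 * (αc^2 + α₁^2)) := by ring
      _ ≤ ((L:ℝ) - (K:ℝ))/48 * (4 * (a^2 + fL^2)) := by
          apply mul_le_mul_of_nonneg_left hstepB; positivity
      _ = ((L:ℝ) - (K:ℝ)) * ((a^2 + fL^2)/12) := by ring
      _ ≤ (n:ℝ) * ((a^2 + fL^2)/12) := by
          apply mul_le_mul_of_nonneg_right hnge; positivity
      _ = (n:ℝ)/12 * (a^2 + fL^2) := by ring
  calc 1/48 * ((L:ℝ) - (K:ℝ)) * γ^2 * (αc^2 + α₁^2)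
      ≤ (n:ℝ)/12 * (a^2 + fL^2) := hmono
    _ ≤ ∑ j ∈ Finset.range n, (a + b * (j:ℝ))^2 := hstepA
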